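/- Let d be a positive integer, S a finite non-abelian simple group, m ≥ 1, and G = S^m. Let F be a surjective GCA on G^{Z^d} that is minimal, i.e. there is no partition of {1, …, m} into two nonempty sets I and J such that F maps (∏_{i∈I} S_i)^{Z^d} into itself and maps (∏_{j∈J} S_j)^{Z^d} into itself. Then F is topologically transitive if and only if there is no integer q ≥ 1 with F^q equal to the identity map of G^{Z^d}. -/

import Mathlib

open Function


lemma exists_window {ι : Type*} {A : ι → Type*} [∀ i, TopologicalSpace (A i)]
    [CompactSpace (∀ i, A i)] {B : Type*} [TopologicalSpace B] [DiscreteTopology B]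
    (f : (∀ i, A i) → B) (hf : Continuous f) :
    ∃ W : Finset ι, ∀ c c' : ∀ i, A i, (∀ i ∈ W, c i = c' i) → f c = f c' := by
  classical
  have hopen : ∀ c : ∀ i, A i, IsOpen (f ⁻¹' {f c}) := fun c =>
    (isOpen_discrete _).preimage hf
  have hbox : ∀ c : ∀ i, A i, ∃ (I : Finset ι) (u : ∀ i, Set (A i)),
      (∀ a ∈ I, IsOpen (u a) ∧ c a ∈ u a) ∧ (I : Set ι).pi u ⊆ f ⁻¹' {f c} := by
    intro c
    exact (isOpen_pi_iff.1 (hopen c)) c rfl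
  choose I u hIu hsub using hbox
  have hcover : (Set.univ : Set (∀ i, A i)) ⊆ ⋃ c, (I c : Set ι).pi (u c) := by
    intro c _
    exact Set.mem_iUnion.2 ⟨c, fun a ha => (hIu c a ha).2⟩
  obtain ⟨T, hT⟩ := isCompact_univ.elim_finite_subcover
    (fun c => (I c : Set ι).pi (u c))
    (fun c => isOpen_set_pi (Finset.finite_toSet _) (fun a ha => (hIu c a ha).1)) hcover
  refine ⟨T.sup I, fun c c' hcc => ?_⟩
  obtain ⟨c0, hc0T, hc0⟩ : ∃ c0 ∈ T, c ∈ (I c0 : Set ι).pi (u c0) := by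
    simpa using hT (Set.mem_univ c)
  have hI0 : I c0 ⊆ T.sup I := Finset.le_sup hc0T
  have h1 : f c = f c0 := hsub c0 hc0
  have h2 : f c' = f c0 := by
    refine hsub c0 (fun a ha => ?_)
    rw [← hcc a (hI0 ha)]
    exact hc0 a ha
  rw [h1, h2]


lemma key_hom {K : Type*} {S : Type*} [Group S] [Finite S]
    (hSsimple : IsSimpleGroup S) (hSnonab : ∃ a b : S, a * b ≠ b * a)
    (E : ((K → S)) →* S) (hE : Function.Surjective E)
    (W : Finset K) (hW : ∀ c c' : K → S, (∀ k ∈ W, c k = c' k) → E c = E c') :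
    ∃ (k0 : K) (α : S →* S), Function.Bijective α ∧ (k0 ∈ W) ∧ ∀ c : K → S, E c = α (c k0) := by
  classical
  set ψ : K → S →* S := fun k => E.comp (MonoidHom.mulSingle (fun _ : K => S) k) with hψ
  have hψ_apply : ∀ (k : K) (s : S), ψ k s = E (Pi.mulSingle k s) := fun _ _ => rfl
  -- coordinates outside W give trivial maps
  have hout : ∀ k : K, k ∉ W → ψ k = 1 := by
    intro k hk
    ext s
    have : E (Pi.mulSingle k s) = E 1 := by
      refine hW _ _ (fun j hj => ?_)
      have : j ≠ k := by rintro rfl; exact hk hj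
      simp [Pi.mulSingle_apply, this]
    simpa [hψ_apply, map_one] using this
  -- normality of ranges
  have hnormal : ∀ k : K, (ψ k).range.Normal := by
    intro k
    constructor
    rintro x ⟨s, rfl⟩ g
    obtain ⟨cg, rfl⟩ := hE g
    have hconj : cg * Pi.mulSingle k s * cg⁻¹ = Pi.mulSingle k (cg k * s * (cg k)⁻¹) := by
      funext j
      by_cases h : j = k
      · subst h; simp [Pi.mulSingle_apply]
      · simp [Pi.mulSingle_apply, h]
    refine ⟨cg k * s * (cg k)⁻¹, ?_⟩
    rw [hψ_apply, ← hconj, map_mul, map_mul, map_inv, hψ_apply]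
  -- elements from different coordinates commute
  have hcomm : ∀ k k' : K, k ≠ k' → ∀ s t : S, Commute (ψ k s) (ψ k' t) := by
    intro k k' hkk s t
    have : (Pi.mulSingle k s : K → S) * Pi.mulSingle k' t = Pi.mulSingle k' t * Pi.mulSingle k s := by
      funext j
      by_cases h : j = k
      · subst h; simp [Pi.mulSingle_apply, hkk, Ne.symm hkk]
      · by_cases h' : j = k'
        · subst h'; simp [Pi.mulSingle_apply, h, hkk]
        · simp [Pi.mulSingle_apply, h, h']
    unfold Commute SemiconjBy
    rw [hψ_apply, hψ_apply, ← map_mul, ← map_mul, this]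
  -- each range is ⊥ or ⊤
  have hdich : ∀ k : K, (ψ k).range = ⊥ ∨ (ψ k).range = ⊤ := fun k =>
    hSsimple.eq_bot_or_eq_top_of_normal _ (hnormal k)
  -- stripping coordinates with trivial range
  have hsplit : ∀ (k : K) (c : K → S), c = Pi.mulSingle k (c k) * Function.update c k 1 := by
    intro k c
    funext j
    by_cases h : j = k
    · subst h; simp [Pi.mulSingle_apply, Function.update]
    · simp [Pi.mulSingle_apply, Function.update, h]
  have hstrip1 : ∀ (k : K), (ψ k).range = ⊥ → ∀ c : K → S, E c = E (Function.update c k 1) := by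
    intro k hk c
    have h1 : ψ k (c k) = 1 := by
      have : ψ k (c k) ∈ (ψ k).range := ⟨c k, rfl⟩
      rw [hk] at this
      simpa using this
    conv_lhs => rw [hsplit k c]
    rw [map_mul, ← hψ_apply, h1, one_mul]
  have hstrip : ∀ (A : Finset K), (∀ k ∈ A, (ψ k).range = ⊥) →
      ∀ c : K → S, E c = E (fun j => if j ∈ A then 1 else c j) := by
    intro A
    induction A using Finset.induction_on with
    | empty => intro _ c; simp
    | @insert k A hkA ih =>
      intro hbot c
      have h1 : E c = E (fun j => if j ∈ A then 1 else c j) :=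
        ih (fun k' hk' => hbot k' (Finset.mem_insert_of_mem hk')) c
      have h2 := hstrip1 k (hbot k (Finset.mem_insert_self _ _)) (fun j => if j ∈ A then 1 else c j)
      rw [h1, h2]
      congr 1
      funext j
      by_cases h : j = k
      · subst h; simp [Function.update]
      · simp [Function.update, h, Finset.mem_insert]
  -- existence of a coordinate with full range
  have hS1 : ∃ s : S, s ≠ 1 := by
    obtain ⟨a, b, hab⟩ := hSnonab
    refine ⟨a, fun h => hab ?_⟩
    subst h; simp
  have hex : ∃ k0 ∈ W, (ψ k0).range = ⊤ := by
    by_contra h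
    push_neg at h
    have hbot : ∀ k ∈ W, (ψ k).range = ⊥ := by
      intro k hk
      rcases hdich k with h' | h'
      · exact h'
      · exact absurd h' (h k hk)
    obtain ⟨s, hs⟩ := hS1
    obtain ⟨c, hc⟩ := hE s
    have h1 : E c = E (fun j => if j ∈ W then 1 else c j) := hstrip W hbot c
    have h2 : E (fun j => if j ∈ W then 1 else c j) = E 1 := by
      refine hW _ _ (fun j hj => ?_)
      simp [hj]
    rw [hc, h2, map_one] at h1; exact hs h1
  obtain ⟨k0, hk0W, hk0⟩ := hex
  -- uniqueness
  have huniq : ∀ k : K, k ≠ k0 → (ψ k).range = ⊥ := by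
    intro k hk
    rcases hdich k with h' | h'
    · exact h'
    · exfalso
      obtain ⟨a, b, hab⟩ := hSnonab
      have ha : a ∈ (ψ k).range := by rw [h']; trivial
      have hb : b ∈ (ψ k0).range := by rw [hk0]; trivial
      obtain ⟨s, hs⟩ := ha
      obtain ⟨t, ht⟩ := hb
      have := hcomm k k0 hk s t
      rw [hs, ht] at this
      exact hab this
  -- final formula
  have hformula : ∀ c : K → S, E c = ψ k0 (c k0) := by
    intro c
    set cW : K → S := fun j => if j ∈ W then c j else 1 with hcW
    have h0 : E c = E cW := by
      refine hW _ _ (fun j hj => ?_)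
      simp [hcW, hj]
    have h1 : E cW = E (fun j => if j ∈ W.erase k0 then 1 else cW j) :=
      hstrip (W.erase k0) (fun k hk => huniq k (Finset.ne_of_mem_erase hk)) cW
    have h2 : (fun j => if j ∈ W.erase k0 then 1 else cW j) = Pi.mulSingle k0 (c k0) := by
      funext j
      by_cases h : j = k0
      · subst h; simp [Finset.mem_erase, hcW, hk0W, Pi.mulSingle_apply]
      · by_cases hjW : j ∈ W
        · simp [Finset.mem_erase, h, hjW, hcW, Pi.mulSingle_apply]
        · simp [Finset.mem_erase, h, hjW, hcW, Pi.mulSingle_apply]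
    rw [h0, h1, h2, hψ_apply]
  have hsurj : Function.Surjective (ψ k0) := MonoidHom.range_eq_top.1 hk0
  exact ⟨k0, ψ k0, Finite.surjective_iff_bijective.1 hsurj, hk0W, hformula⟩

lemma gca_structure (d : ℕ)
    (S : Type*) [Group S] [Finite S] [TopologicalSpace S] [DiscreteTopology S]
    (hSsimple : IsSimpleGroup S) (hSnonab : ∃ a b : S, a * b ≠ b * a)
    (m : ℕ)
    (F : ((Fin d → ℤ) → Fin m → S) → ((Fin d → ℤ) → Fin m → S))
    (hFcont : Continuous F)
    (hFhom : ∀ a b : (Fin d → ℤ) → Fin m → S, F (a * b) = F a * F b)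
    (hFshift : ∀ (u : Fin d → ℤ) (c : (Fin d → ℤ) → Fin m → S),
      F (fun v => c (v + u)) = fun v => F c (v + u))
    (hFsurj : Function.Surjective F) :
    ∃ (u : Fin m → (Fin d → ℤ)) (π : Fin m → Fin m) (α : Fin m → S →* S),
      (∀ i, Function.Bijective (α i)) ∧
      ∀ (c : (Fin d → ℤ) → Fin m → S) (v : Fin d → ℤ) (i : Fin m),
        F c v i = α i (c (v + u i) (π i)) := by
  classical
  have hF1 : F 1 = 1 := by
    have h := hFhom 1 1
    rw [one_mul] at h
    have := mul_left_cancel (a := F 1) (b := (1 : (Fin d → ℤ) → Fin m → S)) (c := F 1)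
    exact (left_eq_mul.1 h)
  -- window
  obtain ⟨W, hW⟩ := exists_window (fun c : (Fin d → ℤ) → Fin m → S => F c 0)
    ((continuous_apply (0 : Fin d → ℤ)).comp hFcont)
  -- shift at a point
  have hshift : ∀ (c : (Fin d → ℤ) → Fin m → S) (v : Fin d → ℤ),
      F c v = F (fun w => c (w + v)) 0 := by
    intro c v
    have h := hFshift v c
    have := congrFun h 0
    rw [this, zero_add]
  -- per-component structure
  have hcomp : ∀ i : Fin m, ∃ (k0 : (Fin d → ℤ) × Fin m) (α : S →* S),
      Function.Bijective α ∧ ∀ c : (Fin d → ℤ) → Fin m → S, F c 0 i = α (c k0.1 k0.2) := by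
    intro i
    set E : ((Fin d → ℤ) × Fin m → S) →* S :=
      { toFun := fun c => F (fun v j => c (v, j)) 0 i
        map_one' := by
          show F (fun v j => (1 : (Fin d → ℤ) × Fin m → S) (v, j)) 0 i = 1
          rw [show (fun v (j : Fin m) => (1 : (Fin d → ℤ) × Fin m → S) (v, j))
              = (1 : (Fin d → ℤ) → Fin m → S) from rfl, hF1]; rfl
        map_mul' := by
          intro a b
          show F (fun v j => (a * b) (v, j)) 0 i = _
          rw [show (fun v (j : Fin m) => (a * b) (v, j))
              = (fun v (j : Fin m) => a (v, j)) * (fun v (j : Fin m) => b (v, j)) from rfl,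
            hFhom]; rfl } with hE
    have hEsurj : Function.Surjective E := by
      intro s
      obtain ⟨c, hc⟩ := hFsurj (fun _ _ => s)
      refine ⟨fun p => c p.1 p.2, ?_⟩
      show F (fun v j => c v j) 0 i = s
      rw [show (fun v j => c v j) = c from rfl, hc]
    obtain ⟨k0, α, hbij, hk0W, hform⟩ := key_hom hSsimple hSnonab E hEsurj
      (W ×ˢ (Finset.univ : Finset (Fin m)))
      (by
        intro c c' hcc
        show F (fun v j => c (v, j)) 0 i = F (fun v j => c' (v, j)) 0 i
        have := hW (fun v j => c (v, j)) (fun v j => c' (v, j))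
          (fun v hv => by
            funext j
            exact hcc (v, j) (Finset.mem_product.2 ⟨hv, Finset.mem_univ _⟩))
        rw [this])
    refine ⟨k0, α, hbij, fun c => ?_⟩
    have := hform (fun p => c p.1 p.2)
    exact this
  choose k0 α hbij hform using hcomp
  refine ⟨fun i => (k0 i).1, fun i => (k0 i).2, α, hbij, ?_⟩
  intro c v i
  rw [hshift c v, hform i]
  rw [add_comm]


/-- A self-map `T` of a topological space `X` is topologically transitive if for all
nonempty open sets `U, V ⊆ X` there exists `n ≥ 0` with `T^n(U) ∩ V ≠ ∅`. -/
def TopologicallyTransitive {X : Type*} [TopologicalSpace X] (T : X → X) : Prop :=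
  ∀ U V : Set X, IsOpen U → IsOpen V → U.Nonempty → V.Nonempty →
    ∃ n : ℕ, (T^[n] '' U ∩ V).Nonempty

theorem stmt15 (d : ℕ) (hd : 0 < d)
    (S : Type*) [Group S] [Finite S] [TopologicalSpace S] [DiscreteTopology S]
    (hSsimple : IsSimpleGroup S) (hSnonab : ∃ a b : S, a * b ≠ b * a)
    (m : ℕ) (hm : 1 ≤ m)
    (F : ((Fin d → ℤ) → Fin m → S) → ((Fin d → ℤ) → Fin m → S))
    (hFcont : Continuous F)
    (hFhom : ∀ a b : (Fin d → ℤ) → Fin m → S, F (a * b) = F a * F b)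
    (hFshift : ∀ (u : Fin d → ℤ) (c : (Fin d → ℤ) → Fin m → S),
      F (fun v => c (v + u)) = fun v => F c (v + u))
    (hFsurj : Function.Surjective F)
    (hFmin : ¬ ∃ I J : Set (Fin m), I.Nonempty ∧ J.Nonempty ∧
      I ∪ J = Set.univ ∧ I ∩ J = ∅ ∧
      Set.MapsTo F {c | ∀ x, ∀ j ∉ I, c x j = 1} {c | ∀ x, ∀ j ∉ I, c x j = 1} ∧
      Set.MapsTo F {c | ∀ x, ∀ j ∉ J, c x j = 1} {c | ∀ x, ∀ j ∉ J, c x j = 1}) :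
    TopologicallyTransitive F ↔ ¬ ∃ q : ℕ, 1 ≤ q ∧ F^[q] = id := by
  classical
  obtain ⟨u, π, α, hα, hform⟩ := gca_structure d S hSsimple hSnonab m F hFcont hFhom hFshift hFsurj
  obtain ⟨s1, hs1⟩ : ∃ s : S, s ≠ (1 : S) := by
    obtain ⟨a, b, hab⟩ := hSnonab
    exact ⟨a, fun h => hab (by rw [h]; simp)⟩
  -- π is injective, hence bijective
  have hπinj : Function.Injective π := by
    intro i i' hii
    by_contra hne
    obtain ⟨c, hc⟩ := hFsurj (fun _ j => if j = i' then s1 else 1)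
    have h1 : ∀ v, c v (π i) = 1 := by
      intro v
      have h := congrFun (congrFun hc (v - u i)) i
      rw [hform] at h
      simp only [if_neg hne] at h
      have h2 : c (v - u i + u i) (π i) = 1 := by
        apply (hα i).1
        rw [h, map_one]
      rwa [sub_add_cancel] at h2
    have h := congrFun (congrFun hc (0 - u i')) i'
    rw [hform, if_pos rfl, ← hii] at h
    rw [h1] at h
    rw [map_one] at h
    exact hs1 h.symm
  have hπbij : Function.Bijective π := Finite.injective_iff_bijective.1 hπinj
  -- the orbit of i0 is everything
  set i0 : Fin m := ⟨0, hm⟩ with hi0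
  have hper : ∃ p : ℕ, 0 < p ∧ π^[p] = id := by
    obtain ⟨a, b, hab, heq⟩ := Finite.exists_ne_map_eq_of_infinite (fun k : ℕ => π^[k])
    rcases Nat.lt_or_ge a b with h | h
    · refine ⟨b - a, Nat.sub_pos_of_lt h, ?_⟩
      funext x
      have : π^[a] (π^[b - a] x) = π^[a] x := by
        rw [← Function.iterate_add_apply, Nat.add_sub_cancel' (le_of_lt h), ← heq]
      exact hπinj.iterate a this
    · have h' : b < a := by omega
      refine ⟨a - b, Nat.sub_pos_of_lt h', ?_⟩
      funext x
      have : π^[b] (π^[a - b] x) = π^[b] x := by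
        rw [← Function.iterate_add_apply, Nat.add_sub_cancel' (le_of_lt h'), heq]
      exact hπinj.iterate b this
  obtain ⟨p, hp0, hpid⟩ := hper
  have hO : ∀ i' : Fin m, ∃ k : ℕ, π^[k] i0 = i' := by
    set O : Set (Fin m) := Set.range (fun k : ℕ => π^[k] i0) with hOdef
    have hOfw : ∀ i ∈ O, π i ∈ O := by
      rintro i ⟨k, rfl⟩
      exact ⟨k + 1, by simp only []; rw [Function.iterate_succ_apply']⟩
    have hObw : ∀ i : Fin m, π i ∈ O → i ∈ O := by
      rintro i ⟨k, hk⟩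
      refine ⟨p - 1 + k, ?_⟩
      show π^[p - 1 + k] i0 = i
      have hk' : π^[k] i0 = π i := hk
      rw [Function.iterate_add_apply, hk', ← Function.iterate_succ_apply,
        Nat.succ_eq_add_one, Nat.sub_add_cancel hp0, hpid]
      rfl
    intro i'
    by_contra hni
    have hOc : ∀ i : Fin m, i ∉ O → π i ∉ O := fun i hi hpi => hi (hObw i hpi)
    apply hFmin
    refine ⟨O, Oᶜ, ⟨i0, ⟨0, rfl⟩⟩, ⟨i', fun h => hni (by obtain ⟨k, hk⟩ := h; exact ⟨k, hk⟩)⟩,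
      Set.union_compl_self O, Set.inter_compl_self O, ?_, ?_⟩
    · intro c hc
      intro x j hj
      rw [hform]
      have : π j ∉ O := hOc j hj
      rw [hc _ _ this, map_one]
    · intro c hc
      intro x j hj
      rw [hform]
      have hjO : j ∈ O := by simpa using hj
      have : π j ∈ O := hOfw j hjO
      rw [hc _ _ (by simpa using this), map_one]
  -- exact period m
  have hfind : ∃ k : ℕ, 0 < k ∧ π^[k] i0 = i0 := ⟨p, hp0, by rw [hpid]; rfl⟩
  set p0 := Nat.find hfind with hp0def
  obtain ⟨hp0pos, hp0fix⟩ := Nat.find_spec hfind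
  have hmin : ∀ k, 0 < k → k < p0 → π^[k] i0 ≠ i0 := by
    intro k hk1 hk2 hfix
    exact (Nat.find_min hfind hk2) ⟨hk1, hfix⟩
  have hmulfix : ∀ q : ℕ, π^[p0 * q] i0 = i0 := by
    intro q; induction q with
    | zero => rfl
    | succ q ih =>
      rw [Nat.mul_succ, Function.iterate_add_apply, hp0fix, ih]
  have hmod : ∀ k : ℕ, π^[k] i0 = π^[k % p0] i0 := by
    intro k
    conv_lhs => rw [← Nat.div_add_mod k p0]
    rw [Nat.add_comm, Function.iterate_add_apply, hmulfix]
  have hginj : ∀ a b : ℕ, a < p0 → b < p0 → π^[a] i0 = π^[b] i0 → a = b := by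
    have key : ∀ a b : ℕ, a < b → b < p0 → π^[a] i0 = π^[b] i0 → False := by
      intro a b h hb hab
      have h1 : π^[a] (π^[b - a] i0) = π^[a] i0 := by
        rw [← Function.iterate_add_apply, Nat.add_sub_cancel' (le_of_lt h), ← hab]
      exact hmin (b - a) (by omega) (by omega) (hπinj.iterate a h1)
    intro a b ha hb hab
    rcases Nat.lt_trichotomy a b with h | h | h
    · exact absurd hab (fun hh => key a b h hb hh)
    · exact h
    · exact absurd hab.symm (fun hh => key b a h ha hh)
  have hgsurj : ∀ i' : Fin m, ∃ k : ℕ, k < p0 ∧ π^[k] i0 = i' := by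
    intro i'; obtain ⟨k, hk⟩ := hO i'
    exact ⟨k % p0, Nat.mod_lt _ hp0pos, by rw [← hmod, hk]⟩
  have hp0m : p0 = m := by
    have h1 : Fintype.card (Fin p0) ≤ Fintype.card (Fin m) :=
      Fintype.card_le_of_injective (fun k : Fin p0 => π^[(k : ℕ)] i0)
        (fun a b hab => Fin.ext (hginj _ _ a.2 b.2 hab))
    have h2 : Fintype.card (Fin m) ≤ Fintype.card (Fin p0) :=
      Fintype.card_le_of_surjective (fun k : Fin p0 => π^[(k : ℕ)] i0)
        (fun i' => by obtain ⟨k, hk1, hk2⟩ := hgsurj i'; exact ⟨⟨k, hk1⟩, hk2⟩)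
    have := le_antisymm h1 h2
    simpa using this
  have hπm : ∀ i : Fin m, π^[m] i = i := by
    intro i
    obtain ⟨k, hk⟩ := hO i
    have hfix : π^[m] i0 = i0 := by
      have h := hp0fix
      rw [show Nat.find hfind = m from hp0m] at h
      exact h
    rw [← hk, ← Function.iterate_add_apply, Nat.add_comm, Function.iterate_add_apply, hfix]
  have hbijm : ∀ i : Fin m, Function.Bijective (fun k : Fin m => π^[(k : ℕ)] i) := by
    intro i
    rw [← Finite.injective_iff_bijective]
    intro a b hab
    obtain ⟨k0', hk0'⟩ := hO i
    have h1 : π^[(a : ℕ) + k0'] i0 = π^[(b : ℕ) + k0'] i0 := by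
      rw [Function.iterate_add_apply, Function.iterate_add_apply, hk0']
      exact hab
    have h2 : ((a : ℕ) + k0') % p0 = ((b : ℕ) + k0') % p0 :=
      hginj _ _ (Nat.mod_lt _ hp0pos) (Nat.mod_lt _ hp0pos) (by rw [← hmod, ← hmod]; exact h1)
    have h4 : (a : ℕ) ≡ (b : ℕ) [MOD p0] := Nat.ModEq.add_right_cancel' k0' h2
    rw [hp0m] at h4
    have h5 : (a : ℕ) % m = (b : ℕ) % m := h4
    exact Fin.ext (by rwa [Nat.mod_eq_of_lt a.2, Nat.mod_eq_of_lt b.2] at h5)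
  -- displacement sums
  set A : ℕ → Fin m → (Fin d → ℤ) := fun n i => ∑ k ∈ Finset.range n, u (π^[k] i) with hA
  set w : Fin d → ℤ := ∑ j, u j with hw
  have hAadd : ∀ (a b : ℕ) (i : Fin m), A (a + b) i = A a i + A b (π^[a] i) := by
    intro a b i
    induction b with
    | zero => simp [hA]
    | succ b ih =>
      have h1 : A (a + (b + 1)) i = A (a + b) i + u (π^[a + b] i) :=
        Finset.sum_range_succ _ _
      have h2 : A (b + 1) (π^[a] i) = A b (π^[a] i) + u (π^[b] (π^[a] i)) :=
        Finset.sum_range_succ _ _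
      rw [h1, ih, h2, ← Function.iterate_add_apply, Nat.add_comm b a, add_assoc]
  have hAm : ∀ i, A m i = w := by
    intro i
    show ∑ k ∈ Finset.range m, u (π^[k] i) = ∑ j, u j
    rw [Finset.sum_range fun k => u (π^[k] i)]
    exact Fintype.sum_bijective _ (hbijm i) (fun k : Fin m => u (π^[(k : ℕ)] i)) u (fun k => rfl)
  have hπmt : ∀ (t : ℕ) (i : Fin m), π^[m * t] i = i := by
    intro t i
    induction t with
    | zero => rfl
    | succ t ih => rw [Nat.mul_succ, Function.iterate_add_apply, hπm, ih]
  have hAmt : ∀ (t : ℕ) (i : Fin m), A (m * t) i = t • w := by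
    intro t i
    induction t with
    | zero => simp [hA]
    | succ t ih =>
      rw [Nat.mul_succ, hAadd, ih, hπmt, hAm, succ_nsmul]
  -- iterate formula
  have hiter : ∀ n : ℕ, ∃ γ : Fin m → S →* S, (∀ i, Function.Bijective (γ i)) ∧
      ∀ c v (i : Fin m), F^[n] c v i = γ i (c (v + A n i) (π^[n] i)) := by
    intro n
    induction n with
    | zero =>
      refine ⟨fun _ => MonoidHom.id S, fun _ => Function.bijective_id, ?_⟩
      intro c v i
      simp [hA]
    | succ n ih =>
      obtain ⟨γ, hγ, hform'⟩ := ih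
      refine ⟨fun i => (γ i).comp (α (π^[n] i)), fun i => ((hγ i).comp (hα _)), ?_⟩
      intro c v i
      have hAs : A (n + 1) i = A n i + u (π^[n] i) := Finset.sum_range_succ _ _
      rw [Function.iterate_succ_apply, hform' (F c) v i, hform]
      simp only [MonoidHom.comp_apply]
      rw [add_assoc, ← hAs, ← Function.iterate_succ_apply' π n i]
  -- cylinders
  have hcylopen : ∀ (E : Finset (Fin d → ℤ)) (x : (Fin d → ℤ) → Fin m → S),
      IsOpen {c : (Fin d → ℤ) → Fin m → S | ∀ v ∈ E, c v = x v} := by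
    intro E x
    have heq : {c : (Fin d → ℤ) → Fin m → S | ∀ v ∈ E, c v = x v}
        = ⋂ v ∈ (E : Set (Fin d → ℤ)), (fun c : (Fin d → ℤ) → Fin m → S => c v) ⁻¹' {x v} := by
      ext c; simp
    rw [heq]
    exact Set.Finite.isOpen_biInter E.finite_toSet
      (fun v _ => (isOpen_discrete _).preimage (continuous_apply v))
  have hcylsub : ∀ (U : Set ((Fin d → ℤ) → Fin m → S)) (x), IsOpen U → x ∈ U →
      ∃ E : Finset (Fin d → ℤ), {c : (Fin d → ℤ) → Fin m → S | ∀ v ∈ E, c v = x v} ⊆ U := by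
    intro U x hU hx
    obtain ⟨I, u', hIu, hsub⟩ := (isOpen_pi_iff.1 hU) x hx
    refine ⟨I, fun c hc => hsub (fun v hv => ?_)⟩
    rw [hc v hv]
    exact (hIu v hv).2
  by_cases hw0 : w = 0
  · -- both sides false
    refine iff_of_false ?_ (not_not_intro ?_)
    · intro htrans
      set A0 : Finset (Fin d → ℤ) :=
        Finset.image (fun pr : ℕ × Fin m => A pr.1 pr.2) ((Finset.range m) ×ˢ Finset.univ)
        with hA0
      obtain ⟨n, z, ⟨c, hcU, hzc⟩, hzV⟩ := htrans
        {c : (Fin d → ℤ) → Fin m → S | ∀ v ∈ A0, c v = (fun _ => s1)}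
        {c : (Fin d → ℤ) → Fin m → S | ∀ v ∈ ({0} : Finset (Fin d → ℤ)), c v = (fun _ => 1)}
        (hcylopen A0 (fun _ _ => s1)) (hcylopen {0} (fun _ _ => 1))
        ⟨fun _ _ => s1, fun v _ => rfl⟩ ⟨fun _ _ => 1, fun v _ => rfl⟩
      subst hzc
      have hrm : n % m < m := Nat.mod_lt _ (by omega)
      obtain ⟨γq, hγq, hfq⟩ := hiter (m * (n / m))
      obtain ⟨γr, hγr, hfr⟩ := hiter (n % m)
      have hn : m * (n / m) + n % m = n := Nat.div_add_mod n m
      have h1 : F^[n] c 0 i0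
          = γq i0 ((F^[n % m] c) (0 + A (m * (n / m)) i0) (π^[m * (n / m)] i0)) := by
        conv_lhs => rw [← hn]
        rw [Function.iterate_add_apply, hfq]
      rw [hπmt, hAmt, hw0, smul_zero, add_zero, hfr] at h1
      have hmem : A (n % m) i0 ∈ A0 := Finset.mem_image.2
        ⟨(n % m, i0), Finset.mem_product.2 ⟨Finset.mem_range.2 hrm, Finset.mem_univ _⟩, rfl⟩
      have hc1 : c (0 + A (n % m) i0) (π^[n % m] i0) = s1 := by
        rw [zero_add]
        have h := hcU (A (n % m) i0) hmem
        rw [h]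
      rw [hc1] at h1
      have h2 : F^[n] c 0 i0 = 1 := by
        have h := hzV 0 (Finset.mem_singleton_self 0)
        rw [h]
      rw [h2] at h1
      have h3 : γr i0 s1 = 1 := (hγq i0).1 (by rw [← h1, map_one])
      exact hs1 ((hγr i0).1 (by rw [h3, map_one]))
    · haveI : Finite (S →* S) := Finite.of_injective (fun f => (f : S → S)) DFunLike.coe_injective
      have hFinj : Function.Injective F := by
        intro c c' hcc
        funext v j
        obtain ⟨i, hi⟩ := hπbij.2 j
        have h := congrFun (congrFun hcc (v - u i)) i
        rw [hform, hform] at h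
        have h' := (hα i).1 h
        rw [sub_add_cancel, hi] at h'
        exact h'
      obtain ⟨t1, t2, hne, heq⟩ := Finite.exists_ne_map_eq_of_infinite
        (fun t : ℕ => Classical.choose (hiter (m * t)))
      have key : ∀ a b : ℕ, a < b →
          Classical.choose (hiter (m * a)) = Classical.choose (hiter (m * b)) →
          F^[m * (b - a)] = id := by
        intro a b hlt hyp
        have hsa := Classical.choose_spec (hiter (m * a))
        have hsb := Classical.choose_spec (hiter (m * b))
        have hFt : F^[m * a] = F^[m * b] := by
          funext c v i
          rw [hsa.2 c v i, hsb.2 c v i, hπmt, hπmt, hAmt, hAmt, hw0, smul_zero, smul_zero, hyp]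
        have hm2 : m * b = m * a + m * (b - a) := by
          rw [← Nat.mul_add, Nat.add_sub_cancel' (le_of_lt hlt)]
        funext c
        have h : F^[m * a] (F^[m * (b - a)] c) = F^[m * a] c := by
          rw [← Function.iterate_add_apply, ← hm2, ← hFt]
        exact hFinj.iterate _ h
      rcases Nat.lt_trichotomy t1 t2 with h | h | h
      · exact ⟨m * (t2 - t1), Nat.mul_pos (by omega) (by omega), key t1 t2 h heq⟩
      · exact absurd h hne
      · exact ⟨m * (t1 - t2), Nat.mul_pos (by omega) (by omega), key t2 t1 h heq.symm⟩
  · obtain ⟨l, hl⟩ : ∃ l, w l ≠ 0 := by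
      by_contra h; push_neg at h; exact hw0 (funext h)
    refine iff_of_true ?_ ?_
    · intro U V hU hV hUne hVne
      obtain ⟨x, hx⟩ := hUne
      obtain ⟨y, hy⟩ := hVne
      obtain ⟨E, hEU⟩ := hcylsub U x hU hx
      obtain ⟨E', hE'V⟩ := hcylsub V y hV hy
      set D : Finset (Fin d → ℤ) := Finset.image (fun pr : _ × _ => pr.1 - pr.2) (E ×ˢ E')
        with hD
      have hinj : Function.Injective (fun t : ℕ => t • w) := by
        intro a b hab
        have h : (a • w) l = (b • w) l := congrFun hab l
        rw [Pi.smul_apply, Pi.smul_apply, nsmul_eq_mul, nsmul_eq_mul] at h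
        exact_mod_cast mul_right_cancel₀ hl h
      obtain ⟨t, ht⟩ : ∃ t : ℕ, t • w ∉ D := by
        by_contra h
        push_neg at h
        have hsub : Finset.image (fun t : ℕ => t • w) (Finset.range (D.card + 1)) ⊆ D := by
          intro z hz
          obtain ⟨t, _, rfl⟩ := Finset.mem_image.1 hz
          exact h t
        have hcard := Finset.card_le_card hsub
        rw [Finset.card_image_of_injective _ hinj, Finset.card_range] at hcard
        omega
      obtain ⟨γ, hγ, hf⟩ := hiter (m * t)
      have hf' : ∀ c v (i : Fin m), F^[m * t] c v i = γ i (c (v + t • w) i) := by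
        intro c v i
        rw [hf, hπmt, hAmt]
      set c : (Fin d → ℤ) → Fin m → S := fun v j =>
        if v - t • w ∈ E' then (MulEquiv.ofBijective (γ j) (hγ j)).symm (y (v - t • w) j)
        else x v j with hcdef
      refine ⟨m * t, F^[m * t] c, ⟨c, hEU ?_, rfl⟩, hE'V ?_⟩
      · intro v hv
        funext j
        have hnot : v - t • w ∉ E' := by
          intro hmem
          exact ht (Finset.mem_image.2 ⟨(v, v - t • w),
            Finset.mem_product.2 ⟨hv, hmem⟩, sub_sub_cancel v (t • w)⟩)
        simp only [hcdef]
        rw [if_neg hnot]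
      · intro v hv
        funext i
        rw [hf']
        have hmem : v + t • w - t • w ∈ E' := by rw [add_sub_cancel_right]; exact hv
        simp only [hcdef]
        rw [if_pos hmem]
        have hms : v + t • w - t • w = v := add_sub_cancel_right _ _
        rw [hms]
        exact (MulEquiv.ofBijective (γ i) (hγ i)).apply_symm_apply (y v i)
    · rintro ⟨q, hq1, hq⟩
      have hqm : F^[m * q] = id := by
        rw [Nat.mul_comm, Function.iterate_mul, hq, Function.iterate_id]
      obtain ⟨γ, hγ, hf⟩ := hiter (m * q)
      set c : (Fin d → ℤ) → Fin m → S := fun v _ => if v = 0 then s1 else 1 with hcdef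
      have hqw : q • w ≠ 0 := by
        intro h
        apply hl
        have h' := congrFun h l
        rw [Pi.smul_apply, nsmul_eq_mul] at h'
        rcases mul_eq_zero.1 h' with h'' | h''
        · exact absurd h'' (by exact_mod_cast (by omega : q ≠ 0))
        · exact h''
      have h2 : F^[m * q] c 0 i0 = γ i0 (c (0 + A (m * q) i0) (π^[m * q] i0)) := hf c 0 i0
      rw [hqm, hπmt, hAmt, zero_add] at h2
      have h3 : c (q • w) i0 = 1 := by
        simp only [hcdef]
        rw [if_neg hqw]
      rw [h3, map_one] at h2
      have h4 : c 0 i0 = s1 := by simp [hcdef]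
      simp only [id_eq] at h2
      rw [h4] at h2
      exact hs1 h2
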